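/- Let X be a real Banach space and let 𝒥 : X → ℝ be a C¹ functional satisfying the Palais–Smale condition with 𝒥(0) = 0. Suppose there exist constants ρ, α > 0 such that 𝒥(u) ≥ α for all u ∈ X with ‖u‖ = ρ, and there exists e ∈ X with ‖e‖ > ρ and 𝒥(e) ≤ 0. Let Γ be the set of continuous paths γ : [0,1] → X with γ(0) = 0 and γ(1) = e, and set c := inf_{γ ∈ Γ} max_{t ∈ [0,1]} 𝒥(γ(t)). Then c ≥ α and c is a critical value of 𝒥, i.e. there exists u ∈ X with 𝒥(u) = c and 𝒥′(u) = 0. -/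

import Mathlib

open Filter

theorem my_ekeland {α : Type*} [MetricSpace α] [CompleteSpace α]
    (Φ : α → ℝ) (hΦ : LowerSemicontinuous Φ) (B : ℝ) (hB : ∀ x, B ≤ Φ x)
    {lam : ℝ} (hlam : 0 < lam) (x₀ : α) :
    ∃ x : α, Φ x ≤ Φ x₀ ∧ ∀ y : α, Φ x - lam * dist x y ≤ Φ y := by
  classical
  set S : α → Set α := fun x => {y | Φ y + lam * dist x y ≤ Φ x} with hS
  have hmem : ∀ x, x ∈ S x := by intro x; simp [hS]
  have hne : ∀ x, (Φ '' S x).Nonempty := fun x => ⟨Φ x, x, hmem x, rfl⟩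
  have hbdd : ∀ x, BddBelow (Φ '' S x) := fun x => ⟨B, by rintro r ⟨y, _, rfl⟩; exact hB y⟩
  have hnext : ∀ (n : ℕ) (x : α), ∃ y, y ∈ S x ∧ Φ y < sInf (Φ '' S x) + (1/2)^n := by
    intro n x
    have h : sInf (Φ '' S x) < sInf (Φ '' S x) + (1/2)^n := by
      have : (0:ℝ) < (1/2)^n := by positivity
      linarith
    obtain ⟨r, ⟨y, hy, rfl⟩, hr⟩ := exists_lt_of_csInf_lt (hne x) h
    exact ⟨y, hy, hr⟩
  set seq : ℕ → α := fun n => Nat.rec x₀ (fun n x => Classical.choose (hnext n x)) n with hseq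
  have hstep : ∀ n, seq (n+1) ∈ S (seq n) ∧ Φ (seq (n+1)) < sInf (Φ '' S (seq n)) + (1/2)^n :=
    fun n => Classical.choose_spec (hnext n (seq n))
  set a : ℕ → ℝ := fun n => Φ (seq n) with ha
  have hdist1 : ∀ n, lam * dist (seq n) (seq (n+1)) ≤ a n - a (n+1) := by
    intro n
    have := (hstep n).1
    simp only [hS, Set.mem_setOf_eq] at this
    linarith
  have hanti : ∀ n m, n ≤ m → a m ≤ a n := by
    intro n m h
    induction m with
    | zero => simp_all
    | succ m ih =>
      rcases Nat.lt_or_ge n (m+1) with h' | h'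
      · have := hdist1 m
        have h2 : 0 ≤ lam * dist (seq m) (seq (m+1)) :=
          mul_nonneg hlam.le dist_nonneg
        have := ih (Nat.lt_succ_iff.mp h')
        linarith
      · have : n = m + 1 := le_antisymm h h'
        simp [this]
  have hdist : ∀ n m, n ≤ m → dist (seq n) (seq m) ≤ (a n - a m) / lam := by
    intro n m h
    induction m with
    | zero => interval_cases n; simp
    | succ m ih =>
      rcases Nat.lt_or_ge n (m+1) with h' | h'
      · have hnm := Nat.lt_succ_iff.mp h'
        have i1 := ih hnm
        have i2 := hdist1 m
        have i3 : dist (seq n) (seq (m+1)) ≤ dist (seq n) (seq m) + dist (seq m) (seq (m+1)) :=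
          dist_triangle _ _ _
        have i4 : dist (seq m) (seq (m+1)) ≤ (a m - a (m+1)) / lam := by
          rw [le_div_iff₀ hlam]; linarith [i2]
        have i5 : (a n - a m)/lam + (a m - a (m+1))/lam = (a n - a (m+1))/lam := by ring
        linarith
      · have : n = m + 1 := le_antisymm h h'
        simp [this]
  -- a converges
  have haL : ∃ L, Tendsto a atTop (nhds L) ∧ ∀ n, L ≤ a n := by
    have hba : BddBelow (Set.range a) := ⟨B, by rintro r ⟨n, rfl⟩; exact hB _⟩
    have hmono : Antitone a := antitone_nat_of_succ_le (fun n => hanti n (n+1) (Nat.le_succ n))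
    refine ⟨⨅ n, a n, tendsto_atTop_ciInf hmono hba, fun n => ciInf_le hba n⟩
  obtain ⟨L, hL, hLle⟩ := haL
  -- seq is Cauchy
  have hcauchy : CauchySeq seq := by
    apply cauchySeq_of_le_tendsto_0 (fun N => (a N - L) / lam)
    · intro n m N hn hm
      have key : ∀ i j, N ≤ i → i ≤ j → dist (seq i) (seq j) ≤ (a N - L) / lam := by
        intro i j hi hij
        calc dist (seq i) (seq j) ≤ (a i - a j) / lam := hdist i j hij
          _ ≤ (a N - L) / lam := by
            have h1 : a i ≤ a N := hanti N i hi
            have h2 : L ≤ a j := hLle j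
            gcongr
      rcases le_total n m with h | h
      · exact key n m hn h
      · rw [dist_comm]; exact key m n hm h
    · have : Tendsto (fun N => (a N - L) / lam) atTop (nhds ((L - L)/lam)) :=
        (hL.sub tendsto_const_nhds).div_const lam
      simpa using this
  obtain ⟨x, hx⟩ := cauchySeq_tendsto_of_complete hcauchy
  -- Φ x ≤ L
  have hΦxL : Φ x ≤ L := by
    by_contra hcon
    push_neg at hcon
    obtain ⟨y, hy1, hy2⟩ := exists_between hcon
    have hev := hΦ x y hy2
    have hev2 : ∀ᶠ n in atTop, y < a n := hx.eventually hev
    have hev3 : ∀ᶠ n in atTop, a n < y := by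
      have := hL.eventually (eventually_lt_nhds hy1)
      exact this
    obtain ⟨n, h1, h2⟩ := (hev2.and hev3).exists
    linarith
  -- x ∈ S (seq n) for all n
  have hxS : ∀ n, lam * dist (seq n) x ≤ a n - Φ x := by
    intro n
    have h1 : Tendsto (fun m => dist (seq n) (seq m)) atTop (nhds (dist (seq n) x)) :=
      (continuous_const.dist continuous_id).continuousAt.tendsto.comp hx
    have h2 : ∀ m ≥ n, dist (seq n) (seq m) ≤ (a n - a m)/lam := fun m hm => hdist n m hm
    have h3 : dist (seq n) x ≤ (a n - L)/lam := by
      refine le_of_tendsto_of_tendsto h1 ((tendsto_const_nhds.sub hL).div_const lam) ?_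
      filter_upwards [eventually_ge_atTop n] with m hm
      exact h2 m hm
    rw [div_eq_inv_mul] at h3
    have := (mul_le_mul_iff_right₀ hlam).mpr h3
    rw [← mul_assoc, mul_inv_cancel₀ hlam.ne', one_mul] at this
    linarith [hΦxL]
  refine ⟨x, le_trans hΦxL (hLle 0), ?_⟩
  intro y
  by_contra hcon
  push_neg at hcon
  have hyS : ∀ n, y ∈ S (seq n) := by
    intro n
    simp only [hS, Set.mem_setOf_eq]
    have ht : dist (seq n) y ≤ dist (seq n) x + dist x y := dist_triangle _ _ _
    have h1 : lam * dist (seq n) y ≤ lam * dist (seq n) x + lam * dist x y := by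
      nlinarith [dist_nonneg (x := seq n) (y := y)]
    have h2 := hxS n
    nlinarith
  have hΦy : ∀ n, a (n+1) - (1/2)^n ≤ Φ y := by
    intro n
    have h1 : sInf (Φ '' S (seq n)) ≤ Φ y := csInf_le (hbdd _) ⟨y, hyS n, rfl⟩
    have h2 := (hstep n).2
    linarith
  have hLy : L ≤ Φ y := by
    have h1 : Tendsto (fun n => a (n+1) - (1/2:ℝ)^n) atTop (nhds (L - 0)) := by
      refine Tendsto.sub ?_ ?_
      · exact hL.comp (tendsto_add_atTop_nat 1)
      · exact tendsto_pow_atTop_nhds_zero_of_lt_one (by norm_num) (by norm_num)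
    rw [sub_zero] at h1
    exact le_of_tendsto h1 (Eventually.of_forall hΦy)
  have : Φ x ≤ Φ y := le_trans hΦxL hLy
  nlinarith [dist_nonneg (x := x) (y := y), mul_nonneg hlam.le (dist_nonneg (x := x) (y := y))]

/-- A C¹ functional `J` on a real normed space satisfies the Palais–Smale condition if every
sequence along which `J` is bounded and `‖J'‖ → 0` admits a convergent subsequence. -/
def PalaisSmale {X : Type*} [NormedAddCommGroup X] [NormedSpace ℝ X] (J : X → ℝ) : Prop :=
  ∀ u : ℕ → X, (∃ C : ℝ, ∀ n, |J (u n)| ≤ C) →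
    Tendsto (fun n => ‖fderiv ℝ J (u n)‖) atTop (nhds 0) →
    ∃ φ : ℕ → ℕ, StrictMono φ ∧ ∃ v : X, Tendsto (fun n => u (φ n)) atTop (nhds v)

set_option maxHeartbeats 2000000 in
/-- Mountain pass theorem of Ambrosetti and Rabinowitz: the mountain pass level
`c = inf_{γ ∈ Γ} max_{t ∈ [0,1]} J(γ(t))` satisfies `c ≥ α` and is a critical value of `J`. -/
theorem mountain_pass
    {X : Type*} [NormedAddCommGroup X] [NormedSpace ℝ X] [CompleteSpace X]
    (J : X → ℝ) (hJ : ContDiff ℝ 1 J) (hPS : PalaisSmale J) (hJ0 : J 0 = 0)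
    (ρ α : ℝ) (hρ : 0 < ρ) (hα : 0 < α)
    (hsphere : ∀ u : X, ‖u‖ = ρ → α ≤ J u)
    (e : X) (he : ρ < ‖e‖) (hJe : J e ≤ 0)
    (c : ℝ)
    (hc : c = sInf {r : ℝ | ∃ γ : ℝ → X, ContinuousOn γ (Set.Icc 0 1) ∧ γ 0 = 0 ∧ γ 1 = e ∧
      r = sSup ((fun t => J (γ t)) '' Set.Icc 0 1)}) :
    α ≤ c ∧ ∃ u : X, J u = c ∧ fderiv ℝ J u = 0 := by
  classical
  have h01 : (0:ℝ) ≤ 1 := zero_le_one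
  have h0I : (0:ℝ) ∈ Set.Icc (0:ℝ) 1 := Set.left_mem_Icc.2 h01
  have h1I : (1:ℝ) ∈ Set.Icc (0:ℝ) 1 := Set.right_mem_Icc.2 h01
  haveI : Nonempty ↥(Set.Icc (0:ℝ) 1) := ⟨⟨0, h0I⟩⟩
  set S : Set ℝ := {r : ℝ | ∃ γ : ℝ → X, ContinuousOn γ (Set.Icc 0 1) ∧ γ 0 = 0 ∧ γ 1 = e ∧
      r = sSup ((fun t => J (γ t)) '' Set.Icc 0 1)} with hSdef
  set Γ : Set C(↥(Set.Icc (0:ℝ) 1), X) := {p | p ⟨0, h0I⟩ = 0 ∧ p ⟨1, h1I⟩ = e} with hΓdef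
  set Φ : ↥Γ → ℝ := fun p => sSup (Set.range (fun t => J (p.1 t))) with hΦdef
  -- maximum is attained
  have hmax : ∀ p : ↥Γ, ∃ t, (∀ s, J (p.1 s) ≤ J (p.1 t)) ∧ Φ p = J (p.1 t) := by
    intro p
    obtain ⟨t, -, ht⟩ := isCompact_univ.exists_isMaxOn Set.univ_nonempty
      ((hJ.continuous.comp p.1.continuous).continuousOn)
    have ht' : ∀ s, J (p.1 s) ≤ J (p.1 t) := fun s => ht (Set.mem_univ s)
    refine ⟨t, ht', le_antisymm ?_ ?_⟩
    · exact csSup_le (Set.range_nonempty _) (by rintro r ⟨s, rfl⟩; exact ht' s)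
    · exact le_csSup ⟨J (p.1 t), by rintro r ⟨s, rfl⟩; exact ht' s⟩ ⟨t, rfl⟩
  have hΦub : ∀ (p : ↥Γ) t, J (p.1 t) ≤ Φ p := by
    intro p t
    obtain ⟨t₀, ht₀, hht₀⟩ := hmax p
    rw [hht₀]; exact ht₀ t
  -- every path in Γ gives an element of S
  have hmemS : ∀ p : ↥Γ, Φ p ∈ S := by
    intro p
    refine ⟨Set.IccExtend h01 p.1, (p.1.continuous.Icc_extend' (h := h01)).continuousOn, ?_, ?_, ?_⟩
    · rw [Set.IccExtend_left]; exact p.2.1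
    · rw [Set.IccExtend_right]; exact p.2.2
    · have hseteq : (fun t => J (Set.IccExtend h01 (⇑p.1) t)) '' Set.Icc 0 1 =
          Set.range (fun t : ↥(Set.Icc (0:ℝ) 1) => J (p.1 t)) := by
        ext r
        constructor
        · rintro ⟨t, ht, rfl⟩
          exact ⟨⟨t, ht⟩, (congrArg J (Set.IccExtend_of_mem h01 _ ht)).symm⟩
        · rintro ⟨t, rfl⟩
          exact ⟨↑t, t.2, congrArg J (Set.IccExtend_of_mem h01 _ t.2)⟩
      rw [hseteq]
  -- every element of S comes from a path in Γ
  have hfromS : ∀ r ∈ S, ∃ p : ↥Γ, Φ p = r := by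
    rintro r ⟨γ, hγc, hγ0, hγ1, rfl⟩
    refine ⟨⟨⟨fun t => γ t, hγc.restrict⟩, ?_, ?_⟩, ?_⟩
    · exact hγ0
    · exact hγ1
    · rw [hΦdef]
      simp only [ContinuousMap.coe_mk]
      rw [Set.image_eq_range]
      rfl
  -- Φ ≥ α on Γ
  have hαΦ : ∀ p : ↥Γ, α ≤ Φ p := by
    intro p
    set γ := Set.IccExtend h01 p.1 with hγ
    have hγc : Continuous γ := p.1.continuous.Icc_extend' (h := h01)
    have hf : ContinuousOn (fun t => ‖γ t‖) (Set.Icc (0:ℝ) 1) :=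
      (hγc.norm).continuousOn
    have h0 : ‖γ 0‖ = 0 := by rw [hγ, Set.IccExtend_left]; rw [p.2.1]; simp
    have h1 : ‖γ 1‖ = ‖e‖ := by rw [hγ, Set.IccExtend_right]; rw [p.2.2]
    have hmem : ρ ∈ Set.Icc ‖γ 0‖ ‖γ 1‖ := by
      rw [h0, h1]; exact ⟨hρ.le, he.le⟩
    obtain ⟨t, htI, ht⟩ := intermediate_value_Icc h01 hf hmem
    have : α ≤ J (γ t) := hsphere _ ht
    have heq : γ t = p.1 ⟨t, htI⟩ := Set.IccExtend_of_mem h01 p.1 htI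
    rw [heq] at this
    exact this.trans (hΦub p _)
  -- Γ is nonempty
  have hpline : (⟨fun t => (t:ℝ) • e, (continuous_subtype_val.smul continuous_const)⟩ : C(↥(Set.Icc (0:ℝ) 1), X)) ∈ Γ := by
    constructor
    · simp
    · simp
  haveI hΓne : Nonempty ↥Γ := ⟨⟨_, hpline⟩⟩
  have hSne : S.Nonempty := ⟨_, hmemS ⟨_, hpline⟩⟩
  have hbddS : BddBelow S := by
    refine ⟨α, fun r hr => ?_⟩
    obtain ⟨p, rfl⟩ := hfromS r hr
    exact hαΦ p
  have hαc : α ≤ c := by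
    rw [hc]
    exact le_csInf hSne (fun r hr => by obtain ⟨p, rfl⟩ := hfromS r hr; exact hαΦ p)
  have hcΦ : ∀ p : ↥Γ, c ≤ Φ p := fun p => hc ▸ csInf_le hbddS (hmemS p)
  -- Γ is a complete space
  have hΓcl : IsClosed Γ := by
    rw [hΓdef]
    have : {p : C(↥(Set.Icc (0:ℝ) 1), X) | p ⟨0, h0I⟩ = 0 ∧ p ⟨1, h1I⟩ = e} =
        {p : C(↥(Set.Icc (0:ℝ) 1), X) | p ⟨0, h0I⟩ = 0} ∩ {p | p ⟨1, h1I⟩ = e} := rfl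
    rw [this]
    exact (isClosed_eq (continuous_eval_const _) continuous_const).inter
      (isClosed_eq (continuous_eval_const _) continuous_const)
  haveI : CompleteSpace ↥Γ := hΓcl.completeSpace_coe
  -- Φ is lower semicontinuous
  have hlsc : LowerSemicontinuous Φ := by
    intro p y hy
    obtain ⟨t, -, htmax⟩ := hmax p
    rw [htmax] at hy
    have hcont : Continuous (fun q : ↥Γ => J (q.1 t)) :=
      hJ.continuous.comp ((continuous_eval_const t).comp continuous_subtype_val)
    have hopen : IsOpen {q : ↥Γ | y < J (q.1 t)} := isOpen_lt continuous_const hcont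
    filter_upwards [hopen.mem_nhds hy] with q hq
    exact lt_of_lt_of_le hq (hΦub q t)
  -- KEY STEP
  have key : ∀ ε : ℝ, 0 < ε → ε ≤ 1 →
      ∃ u : X, c ≤ J u ∧ J u ≤ c + ε ∧ ‖fderiv ℝ J u‖ ≤ 5 * Real.sqrt ε := by
    intro ε hε hε1
    set lam := Real.sqrt ε with hlamdef
    have hlam : 0 < lam := Real.sqrt_pos.2 hε
    -- starting point from near-infimum
    obtain ⟨r, hrS, hrlt⟩ : ∃ r ∈ S, r < c + ε := by
      apply exists_lt_of_csInf_lt hSne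
      rw [← hc]; linarith
    obtain ⟨p₀, hp₀⟩ := hfromS r hrS
    obtain ⟨p, hpΦ, hEk⟩ := my_ekeland Φ hlsc α hαΦ hlam p₀
    have hpc : Φ p < c + ε := by rw [hp₀] at hpΦ; linarith
    -- extended path
    set g : ℝ → X := Set.IccExtend h01 p.1 with hgdef
    have hgc : Continuous g := p.1.continuous.Icc_extend' (h := h01)
    have hgp : ∀ t (ht : t ∈ Set.Icc (0:ℝ) 1), g t = p.1 ⟨t, ht⟩ :=
      fun t ht => Set.IccExtend_of_mem h01 _ ht
    have hg0 : g 0 = 0 := by rw [hgdef, Set.IccExtend_left]; exact p.2.1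
    have hg1 : g 1 = e := by rw [hgdef, Set.IccExtend_right]; exact p.2.2
    have hgub : ∀ t ∈ Set.Icc (0:ℝ) 1, J (g t) ≤ Φ p := fun t ht => by
      rw [hgp t ht]; exact hΦub p _
    -- the set of maximum points
    set M : Set ℝ := {t | t ∈ Set.Icc (0:ℝ) 1 ∧ J (g t) = Φ p} with hMdef
    have hMne : M.Nonempty := by
      obtain ⟨t, -, htmax⟩ := hmax p
      refine ⟨↑t, t.2, ?_⟩
      rw [hgp ↑t t.2]
      exact htmax.symm
    have hMcl : IsClosed M := by
      have : M = Set.Icc 0 1 ∩ {t | J (g t) = Φ p} := rfl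
      rw [this]
      exact isClosed_Icc.inter (isClosed_eq (hJ.continuous.comp hgc) continuous_const)
    have hMcp : IsCompact M := isCompact_Icc.of_isClosed_subset hMcl (fun t ht => ht.1)
    have hΦα : α ≤ Φ p := hαΦ p
    have hM01 : M ⊆ Set.Ioo (0:ℝ) 1 := by
      rintro t ⟨⟨ht0, ht1⟩, htJ⟩
      rcases ht0.lt_or_eq with h0 | h0
      · rcases ht1.lt_or_eq with h1 | h1
        · exact ⟨h0, h1⟩
        · exfalso; rw [h1, hg1] at htJ; linarith
      · exfalso; rw [← h0, hg0, hJ0] at htJ; linarith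
    -- main claim: some maximum point is almost critical
    have hcrit : ∃ t, t ∈ M ∧ ‖fderiv ℝ J (g t)‖ ≤ 5 * lam := by
      by_contra hcon
      push_neg at hcon
      -- descent directions
      have hwex : ∀ t : ↥M, ∃ w : X, ‖w‖ ≤ 1 ∧ fderiv ℝ J (g ↑t) w < -(5*lam) := by
        intro t
        obtain ⟨x, hx1, hx2⟩ := (fderiv ℝ J (g ↑t)).exists_lt_apply_of_lt_opNorm (hcon ↑t t.2)
        rcases le_or_gt 0 (fderiv ℝ J (g ↑t) x) with h | h
        · refine ⟨-x, by simpa using hx1.le, ?_⟩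
          rw [map_neg]
          rw [Real.norm_eq_abs, abs_of_nonneg h] at hx2
          linarith
        · refine ⟨x, hx1.le, ?_⟩
          rw [Real.norm_eq_abs, abs_of_neg h] at hx2
          linarith
      choose w hw1 hw2 using hwex
      have hfc : Continuous (fun x => fderiv ℝ J x) := hJ.continuous_fderiv one_ne_zero
      set U : ↥M → Set ℝ := fun t => {s | fderiv ℝ J (g s) (w t) < -(5*lam)} ∩ Set.Ioo 0 1
        with hUdef
      have hUo : ∀ t, IsOpen (U t) := fun t =>
        (isOpen_lt ((hfc.comp hgc).clm_apply continuous_const) continuous_const).inter isOpen_Ioo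
      have hUsub : ∀ t, U t ⊆ Set.Ioo 0 1 := fun t => Set.inter_subset_right
      have hMU : M ⊆ ⋃ t : ↥M, U t := fun s hs =>
        Set.mem_iUnion.2 ⟨⟨s, hs⟩, hw2 ⟨s, hs⟩, hM01 hs⟩
      obtain ⟨F, hF⟩ := hMcp.elim_finite_subcover U hUo hMU
      -- partition of unity
      set χ : ↥M → ℝ → ℝ := fun i s => Metric.infDist s (U i)ᶜ with hχdef
      have hχc : ∀ i, Continuous (χ i) := fun i => Metric.continuous_infDist_pt _
      have hχnn : ∀ i s, 0 ≤ χ i s := fun i s => Metric.infDist_nonneg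
      have hχ0 : ∀ i s, s ∉ U i → χ i s = 0 := fun i s hs => Metric.infDist_zero_of_mem hs
      have hχmem : ∀ i s, χ i s ≠ 0 → s ∈ U i := by
        intro i s hs
        by_contra h
        exact hs (hχ0 i s h)
      have hχpos : ∀ i s, s ∈ U i → 0 < χ i s := by
        intro i s hs
        have hne : ((U i)ᶜ : Set ℝ).Nonempty :=
          ⟨2, fun h => by have := (hUsub i h).2; norm_num at this⟩
        rw [← (hUo i).isClosed_compl.notMem_iff_infDist_pos hne]
        simpa using hs
      set D : ℝ → ℝ := fun s => (∑ i ∈ F, χ i s) + Metric.infDist s M with hDdef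
      have hDc : Continuous D :=
        (continuous_finset_sum F (fun i _ => hχc i)).add (Metric.continuous_infDist_pt M)
      have hsumnn : ∀ s, 0 ≤ ∑ i ∈ F, χ i s :=
        fun s => Finset.sum_nonneg fun i _ => hχnn i s
      have hDpos : ∀ s, 0 < D s := by
        intro s
        by_cases hs : s ∈ M
        · obtain ⟨i, hiF, hiU⟩ := Set.mem_iUnion₂.1 (hF hs)
          have h1 : 0 < χ i s := hχpos i s hiU
          have h2 : χ i s ≤ ∑ j ∈ F, χ j s :=
            Finset.single_le_sum (fun j _ => hχnn j s) hiF
          have h3 : (0:ℝ) ≤ Metric.infDist s M := Metric.infDist_nonneg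
          simp only [hDdef]; linarith
        · have h1 : 0 < Metric.infDist s M := (hMcl.notMem_iff_infDist_pos hMne).1 hs
          have h2 := hsumnn s
          simp only [hDdef]; linarith
      have hsumD : ∀ s, ∑ i ∈ F, χ i s ≤ D s := by
        intro s
        have h3 : (0:ℝ) ≤ Metric.infDist s M := Metric.infDist_nonneg
        simp only [hDdef]; linarith
      set v : ℝ → X := fun s => (D s)⁻¹ • ∑ i ∈ F, χ i s • w i with hvdef
      have hvc : Continuous v :=
        (hDc.inv₀ (fun s => (hDpos s).ne')).smul
          (continuous_finset_sum F (fun i _ => (hχc i).smul continuous_const))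
      have hvnorm : ∀ s, ‖v s‖ ≤ 1 := by
        intro s
        have h1 : ‖∑ i ∈ F, χ i s • w i‖ ≤ ∑ i ∈ F, χ i s := by
          refine (norm_sum_le _ _).trans ?_
          apply Finset.sum_le_sum
          intro i _
          rw [norm_smul, Real.norm_eq_abs, abs_of_nonneg (hχnn i s)]
          exact mul_le_of_le_one_right (hχnn i s) (hw1 i)
        have h2 : ‖v s‖ = (D s)⁻¹ * ‖∑ i ∈ F, χ i s • w i‖ := by
          rw [hvdef]
          simp only
          rw [norm_smul, Real.norm_eq_abs, abs_of_nonneg (inv_nonneg.2 (hDpos s).le)]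
        rw [h2]
        calc (D s)⁻¹ * ‖∑ i ∈ F, χ i s • w i‖ ≤ (D s)⁻¹ * D s :=
              mul_le_mul_of_nonneg_left (h1.trans (hsumD s)) (inv_nonneg.2 (hDpos s).le)
          _ = 1 := inv_mul_cancel₀ (hDpos s).ne'
      have hvzero : ∀ s, s ∉ Set.Ioo (0:ℝ) 1 → v s = 0 := by
        intro s hs
        have h1 : ∀ i ∈ F, χ i s • w i = 0 := fun i _ => by
          rw [hχ0 i s (fun h => hs (hUsub i h)), zero_smul]
        rw [hvdef]
        simp only
        rw [Finset.sum_eq_zero h1, smul_zero]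
      -- derivative along v on M
      have hvM : ∀ s ∈ M, fderiv ℝ J (g s) (v s) ≤ -(5*lam) := by
        intro s hs
        have hDs : Metric.infDist s M = 0 := Metric.infDist_zero_of_mem hs
        have heq : fderiv ℝ J (g s) (v s)
            = (D s)⁻¹ * ∑ i ∈ F, χ i s * fderiv ℝ J (g s) (w i) := by
          rw [hvdef]
          simp only
          rw [map_smul, map_sum, smul_eq_mul]
          congr 1
          exact Finset.sum_congr rfl (fun i _ => by rw [map_smul, smul_eq_mul])
        have hterm : ∀ i ∈ F, χ i s * fderiv ℝ J (g s) (w i) ≤ χ i s * (-(5*lam)) := by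
          intro i _
          rcases eq_or_ne (χ i s) 0 with h | h
          · rw [h]; simp
          · have hsU := hχmem i s h
            exact mul_le_mul_of_nonneg_left (le_of_lt hsU.1) (hχnn i s)
        have hsum : ∑ i ∈ F, χ i s * fderiv ℝ J (g s) (w i)
            ≤ (∑ i ∈ F, χ i s) * (-(5*lam)) := by
          rw [Finset.sum_mul]
          exact Finset.sum_le_sum hterm
        have hDseq : D s = ∑ i ∈ F, χ i s := by
          simp only [hDdef]; rw [hDs, add_zero]
        rw [heq]
        calc (D s)⁻¹ * ∑ i ∈ F, χ i s * fderiv ℝ J (g s) (w i)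
            ≤ (D s)⁻¹ * ((∑ i ∈ F, χ i s) * (-(5*lam))) :=
              mul_le_mul_of_nonneg_left hsum (inv_nonneg.2 (hDpos s).le)
          _ = -(5*lam) := by
              rw [← hDseq, ← mul_assoc, inv_mul_cancel₀ (hDpos s).ne', one_mul]
      -- the function φ and the open set W
      set φfun : ℝ → ℝ := fun s => fderiv ℝ J (g s) (v s) with hφdef
      have hφc : Continuous φfun := (hfc.comp hgc).clm_apply hvc
      set W : Set ℝ := {s | φfun s < -(4*lam)} with hWdef
      have hWo : IsOpen W := isOpen_lt hφc continuous_const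
      have hMW : M ⊆ W := fun s hs => lt_of_le_of_lt (hvM s hs) (by linarith)
      have hφcl : ∀ s ∈ closure W, φfun s ≤ -(4*lam) := by
        intro s hs
        have hsub : closure W ⊆ {s | φfun s ≤ -(4*lam)} :=
          closure_minimal (fun x hx => le_of_lt (show φfun x < -(4*lam) from hx)) (isClosed_le hφc continuous_const)
        exact hsub hs
      -- uniform gap β off W
      set K : Set ℝ := Set.Icc 0 1 \ W with hKdef
      have hKcp : IsCompact K := isCompact_Icc.diff hWo
      obtain ⟨β, hβpos, hβK⟩ : ∃ β : ℝ, 0 < β ∧ ∀ s ∈ K, J (g s) ≤ Φ p - β := by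
        rcases K.eq_empty_or_nonempty with hKe | hKne
        · exact ⟨1, one_pos, fun s hs => by rw [hKe] at hs; exact absurd hs (Set.notMem_empty s)⟩
        · obtain ⟨s₀, hs₀K, hs₀⟩ := hKcp.exists_isMaxOn hKne
            ((hJ.continuous.comp hgc).continuousOn)
          have h1 : J (g s₀) < Φ p := by
            rcases (hgub s₀ hs₀K.1).lt_or_eq with h | h
            · exact h
            · exact absurd (hMW ⟨hs₀K.1, h⟩) hs₀K.2
          refine ⟨Φ p - J (g s₀), by linarith, fun s hs => ?_⟩
          have h4 : J (g s) ≤ J (g s₀) := hs₀ hs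
          linarith
      -- the two-variable derivative function
      set Ψ : ℝ × ℝ → ℝ := fun z => fderiv ℝ J (g z.1 + z.2 • v z.1) (v z.1) with hΨdef
      have hΨc : Continuous Ψ :=
        (hfc.comp ((hgc.comp continuous_fst).add
          (continuous_snd.smul (hvc.comp continuous_fst)))).clm_apply (hvc.comp continuous_fst)
      set T : Set (ℝ × ℝ) := (Set.Icc 0 1 ∩ closure W) ×ˢ Set.Icc 0 1 with hTdef
      have hTcp : IsCompact T := (isCompact_Icc.inter_right isClosed_closure).prod isCompact_Icc
      have hΨ0 : ∀ s ∈ Set.Icc (0:ℝ) 1 ∩ closure W, Ψ (s, 0) ≤ -(4*lam) := by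
        intro s hs
        have : Ψ (s, 0) = φfun s := by
          simp only [hΨdef, hφdef, zero_smul, add_zero]
        rw [this]
        exact hφcl s hs.2
      set B : Set (ℝ × ℝ) := T ∩ {z | -(3*lam) ≤ Ψ z} with hBdef
      have hBcp : IsCompact B := hTcp.inter_right (isClosed_le continuous_const hΨc)
      obtain ⟨δ₀, hδ₀pos, hδ₀⟩ : ∃ δ₀ : ℝ, 0 < δ₀ ∧ ∀ z ∈ T, z.2 < δ₀ → Ψ z < -(3*lam) := by
        rcases B.eq_empty_or_nonempty with hBe | hBne
        · refine ⟨1, one_pos, fun z hz _ => ?_⟩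
          by_contra h
          push_neg at h
          have : z ∈ B := ⟨hz, h⟩
          rw [hBe] at this
          exact this
        · obtain ⟨z₀, hz₀B, hz₀⟩ := hBcp.exists_isMinOn hBne continuous_snd.continuousOn
          have hz₀pos : 0 < z₀.2 := by
            rcases (hz₀B.1.2.1 : (0:ℝ) ≤ z₀.2).lt_or_eq with h | h
            · exact h
            · exfalso
              have h1 := hΨ0 z₀.1 hz₀B.1.1
              have h2 : Ψ (z₀.1, 0) = Ψ z₀ := by rw [show ((z₀.1, (0:ℝ))) = z₀ from Prod.ext rfl h]
              have h3 := hz₀B.2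
              rw [h2] at h1
              simp only [Set.mem_setOf_eq] at h3
              linarith
          refine ⟨z₀.2, hz₀pos, fun z hz hlt => ?_⟩
          by_contra h
          push_neg at h
          exact absurd (hz₀ (⟨hz, h⟩ : z ∈ B)) (not_le.2 hlt)
      -- global bound on Ψ
      obtain ⟨Kb, hKbnn, hKb⟩ : ∃ Kb : ℝ, 0 ≤ Kb ∧
          ∀ z ∈ (Set.Icc (0:ℝ) 1) ×ˢ (Set.Icc (0:ℝ) 1), Ψ z ≤ Kb := by
        obtain ⟨z₀, -, hz₀⟩ := (isCompact_Icc.prod isCompact_Icc).exists_isMaxOn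
          ⟨((0:ℝ),(0:ℝ)), Set.mk_mem_prod h0I h0I⟩ hΨc.continuousOn
        exact ⟨max (Ψ z₀) 0, le_max_right _ _, fun z hz => (hz₀ hz).trans (le_max_left _ _)⟩
      -- choice of δ
      set δ : ℝ := min (min (δ₀/2) 1) (β / (2*(Kb + lam + 1))) with hδdef
      have hδpos : 0 < δ := lt_min (lt_min (by linarith) one_pos) (by positivity)
      have hδ1 : δ ≤ 1 := (min_le_left _ _).trans (min_le_right _ _)
      have hδδ₀ : δ < δ₀ := lt_of_le_of_lt ((min_le_left _ _).trans (min_le_left _ _)) (by linarith)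
      have hδβ : δ * (Kb + lam) < β := by
        have h1 : δ ≤ β / (2*(Kb + lam + 1)) := min_le_right _ _
        have h2 : δ * (Kb + lam) ≤ (β / (2*(Kb+lam+1))) * (Kb + lam) :=
          mul_le_mul_of_nonneg_right h1 (by positivity)
        have h3 : (β / (2*(Kb+lam+1))) * (Kb + lam) < β := by
          rw [div_mul_eq_mul_div, div_lt_iff₀ (by positivity)]
          nlinarith
        linarith
      -- mean value estimates
      have hJd : Differentiable ℝ J := hJ.differentiable one_ne_zero
      have hderiv : ∀ s a : ℝ, HasDerivAt (fun a => J (g s + a • v s)) (Ψ (s, a)) a := by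
        intro s a
        have h1 : HasDerivAt (fun a : ℝ => g s + a • v s) (v s) a := by
          have h2 := (hasDerivAt_id a).smul_const (v s)
          have h3 := h2.const_add (g s)
          simpa using h3
        have h2 := (hJd (g s + a • v s)).hasFDerivAt.comp_hasDerivAt a h1
        exact h2
      have hMVT : ∀ s Cb : ℝ, (∀ a ∈ Set.Ioo (0:ℝ) δ, Ψ (s, a) ≤ Cb) →
          J (g s + δ • v s) - J (g s) ≤ Cb * δ := by
        intro s Cb hCb
        have hcont : ContinuousOn (fun a => J (g s + a • v s)) (Set.Icc 0 δ) :=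
          (hJ.continuous.comp (continuous_const.add (continuous_id.smul continuous_const))).continuousOn
        have hdiff : DifferentiableOn ℝ (fun a => J (g s + a • v s)) (interior (Set.Icc 0 δ)) :=
          fun a _ => ((hderiv s a).differentiableAt).differentiableWithinAt
        have hkey := (convex_Icc (0:ℝ) δ).image_sub_le_mul_sub_of_deriv_le hcont hdiff
          (C := Cb) ?_ 0 (Set.left_mem_Icc.2 hδpos.le) δ (Set.right_mem_Icc.2 hδpos.le) hδpos.le
        · simpa using hkey
        · intro a ha
          rw [interior_Icc] at ha
          rw [(hderiv s a).deriv]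
          exact hCb a ha
      -- the deformation estimate
      have hest : ∀ s ∈ Set.Icc (0:ℝ) 1, J (g s + δ • v s) < Φ p - lam * δ := by
        intro s hs
        by_cases hsW : s ∈ W
        · have hbound : ∀ a ∈ Set.Ioo (0:ℝ) δ, Ψ (s, a) ≤ -(3*lam) := by
            intro a ha
            have hmem : ((s, a) : ℝ × ℝ) ∈ T :=
              ⟨⟨hs, subset_closure hsW⟩, ⟨ha.1.le, ha.2.le.trans hδ1⟩⟩
            exact (hδ₀ (s, a) hmem (lt_of_lt_of_le ha.2 (le_of_lt hδδ₀))).le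
          have h1 := hMVT s (-(3*lam)) hbound
          have h2 := hgub s hs
          nlinarith [mul_pos hlam hδpos]
        · have hsK : s ∈ K := ⟨hs, hsW⟩
          have hbound : ∀ a ∈ Set.Ioo (0:ℝ) δ, Ψ (s, a) ≤ Kb := by
            intro a ha
            exact hKb (s, a) ⟨hs, ⟨ha.1.le, ha.2.le.trans hδ1⟩⟩
          have h1 := hMVT s Kb hbound
          have h2 := hβK s hsK
          nlinarith [mul_pos hlam hδpos]
      -- the deformed path
      have hqcont : Continuous (fun t : ↥(Set.Icc (0:ℝ) 1) => g ↑t + δ • v ↑t) :=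
        ((hgc.add (hvc.const_smul δ)).comp continuous_subtype_val)
      have hqΓ : (⟨fun t => g ↑t + δ • v ↑t, hqcont⟩ : C(↥(Set.Icc (0:ℝ) 1), X)) ∈ Γ := by
        constructor
        · show g 0 + δ • v 0 = 0
          rw [hg0, hvzero 0 (by simp), smul_zero, add_zero]
        · show g 1 + δ • v 1 = e
          rw [hg1, hvzero 1 (by simp), smul_zero, add_zero]
      set q : ↥Γ := ⟨⟨fun t => g ↑t + δ • v ↑t, hqcont⟩, hqΓ⟩ with hqdef
      have hdistpq : dist p q ≤ δ := by
        rw [Subtype.dist_eq]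
        rw [ContinuousMap.dist_le hδpos.le]
        intro x
        have h1 : p.1 x = g ↑x := (hgp ↑x x.2).symm
        have h2 : (⇑(q : C(↥(Set.Icc (0:ℝ) 1), X))) x = g ↑x + δ • v ↑x := rfl
        rw [dist_eq_norm, h1, h2]
        have : g ↑x - (g ↑x + δ • v ↑x) = -(δ • v ↑x) := by abel
        rw [this, norm_neg, norm_smul, Real.norm_eq_abs, abs_of_nonneg hδpos.le]
        exact mul_le_of_le_one_right hδpos.le (hvnorm ↑x)
      have hEkq := hEk q
      obtain ⟨tq, -, htq⟩ := hmax q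
      have h1 : J (q.1 tq) < Φ p - lam * δ := hest ↑tq tq.2
      have h2 : Φ p - lam * δ ≤ Φ q := by
        have h3 : lam * dist p q ≤ lam * δ := mul_le_mul_of_nonneg_left hdistpq hlam.le
        linarith
      rw [htq] at h2
      linarith
    obtain ⟨t, htM, htc⟩ := hcrit
    refine ⟨g t, ?_, ?_, htc⟩
    · rw [htM.2]; exact hcΦ p
    · rw [htM.2]; linarith
  -- conclude by Palais-Smale
  have hu : ∀ n : ℕ, ∃ u : X, c ≤ J u ∧ J u ≤ c + 1/((n:ℝ)+1) ∧
      ‖fderiv ℝ J u‖ ≤ 5 * Real.sqrt (1/((n:ℝ)+1)) := by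
    intro n
    refine key (1/((n:ℝ)+1)) (by positivity) ?_
    rw [div_le_one (by positivity)]
    linarith [Nat.cast_nonneg (α := ℝ) n]
  choose u hu1 hu2 hu3 using hu
  have h1n : ∀ n : ℕ, 1/((n:ℝ)+1) ≤ 1 := by
    intro n
    rw [div_le_one (by positivity)]
    linarith [Nat.cast_nonneg (α := ℝ) n]
  have hJb : ∃ C, ∀ n, |J (u n)| ≤ C := by
    refine ⟨|c| + 1, fun n => abs_le.2 ⟨?_, ?_⟩⟩
    · linarith [hu1 n, neg_abs_le c]
    · linarith [hu2 n, le_abs_self c, h1n n]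
  have h1n0 : Tendsto (fun n : ℕ => 1/((n:ℝ)+1)) atTop (nhds 0) :=
    tendsto_one_div_add_atTop_nhds_zero_nat
  have hfd0 : Tendsto (fun n => ‖fderiv ℝ J (u n)‖) atTop (nhds 0) := by
    apply squeeze_zero (fun n => norm_nonneg _) hu3
    have h2 : Tendsto (fun n : ℕ => Real.sqrt (1/((n:ℝ)+1))) atTop (nhds (Real.sqrt 0)) :=
      (Real.continuous_sqrt.tendsto 0).comp h1n0
    rw [Real.sqrt_zero] at h2
    have := h2.const_mul (5:ℝ)
    simpa using this
  obtain ⟨φ, hφ, v, hv⟩ := hPS u hJb hfd0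
  have hJu_c : Tendsto (fun n => J (u n)) atTop (nhds c) := by
    have hlim : Tendsto (fun n : ℕ => c + 1/((n:ℝ)+1)) atTop (nhds c) := by
      have := h1n0.const_add c
      simpa using this
    exact tendsto_of_tendsto_of_tendsto_of_le_of_le tendsto_const_nhds hlim hu1 hu2
  have hJv : J v = c := by
    have h1 : Tendsto (fun n => J (u (φ n))) atTop (nhds (J v)) :=
      (hJ.continuous.continuousAt.tendsto).comp hv
    have h2 : Tendsto (fun n => J (u (φ n))) atTop (nhds c) :=
      hJu_c.comp hφ.tendsto_atTop
    exact tendsto_nhds_unique h1 h2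
  have hfdv : fderiv ℝ J v = 0 := by
    have h1 : Tendsto (fun n => fderiv ℝ J (u (φ n))) atTop (nhds (fderiv ℝ J v)) :=
      ((hJ.continuous_fderiv one_ne_zero).continuousAt.tendsto).comp hv
    have h2 : Tendsto (fun n => ‖fderiv ℝ J (u (φ n))‖) atTop (nhds ‖fderiv ℝ J v‖) :=
      (continuous_norm.continuousAt.tendsto).comp h1
    have h3 : Tendsto (fun n => ‖fderiv ℝ J (u (φ n))‖) atTop (nhds 0) :=
      hfd0.comp hφ.tendsto_atTop
    have := tendsto_nhds_unique h2 h3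
    exact norm_eq_zero.1 this
  exact ⟨hαc, v, hJv, hfdv⟩
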